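/- Let a, b, c be integers with gcd(a,b,c) = 1 and a·c ≠ 0. Then there exist integers x, y with gcd(x,y) = 1 such that gcd(a·x + b·y, c·y) = |a·c|. -/

import Mathlib

/-- If `gcd (gcd a b) c = 1` and `a ≠ 0`, there is `t` with `b + t*c` coprime to `a`. -/
lemma exists_coprime_shift (a b c : ℤ) (habc : Int.gcd (Int.gcd a b) c = 1)
    (ha : a ≠ 0) : ∃ t : ℤ, Int.gcd (b + t * c) a = 1 := by
  classical
  set ps := a.natAbs.primeFactors.filter (fun p : ℕ => ¬ ((p : ℤ) ∣ b)) with hps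
  refine ⟨((ps.prod (fun p => p) : ℕ) : ℤ), ?_⟩
  apply Nat.coprime_of_dvd
  intro p pp hp1 hp2
  -- p prime, p ∣ (b + t*c).natAbs, p ∣ a.natAbs
  have hpa : (p : ℤ) ∣ a := Int.natAbs_dvd_natAbs.mp (by simpa using hp2)
  have hpsum : (p : ℤ) ∣ b + (ps.prod (fun p => p) : ℕ) * c :=
    Int.natAbs_dvd_natAbs.mp (by simpa using hp1)
  by_cases hpb : (p : ℤ) ∣ b
  · have hptc : (p : ℤ) ∣ (ps.prod (fun p => p) : ℕ) * c := by
      have := dvd_sub hpsum hpb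
      simpa using this
    rcases (Int.Prime.dvd_mul' (by exact_mod_cast pp) hptc) with h | hpc
    · -- p divides the product, so p ∈ ps, contradicting p ∣ b
      have hpprod : p ∣ ps.prod (fun p => p) := by exact_mod_cast h
      obtain ⟨q, hq, hq'⟩ := (Nat.Prime.prime pp).dvd_finset_prod_iff (fun p => p) |>.mp hpprod
      have hpq : p = q := (Nat.prime_dvd_prime_iff_eq pp
        (Nat.prime_of_mem_primeFactors (Finset.mem_filter.mp hq).1)).mp hq'
      have hqb := (Finset.mem_filter.mp hq).2
      rw [← hpq] at hqb
      exact hqb hpb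
    · -- p divides a, b, c : contradicts gcd = 1
      have hpb' : (p : ℤ) ∣ b := hpb
      have h1 : (p : ℤ) ∣ (Int.gcd a b : ℤ) := Int.dvd_coe_gcd hpa hpb'
      have h2 : (p : ℤ) ∣ (Int.gcd (Int.gcd a b) c : ℤ) := Int.dvd_coe_gcd h1 hpc
      rw [habc] at h2
      have : p ∣ 1 := by exact_mod_cast h2
      exact pp.one_lt.ne' (Nat.dvd_one.mp this)
  · -- p ∈ ps, so p ∣ product, so p ∣ b from hpsum : contradiction
    have hpmem : p ∈ ps := by
      exact Finset.mem_filter.mpr ⟨Nat.mem_primeFactors.mpr ⟨pp, hp2, by simpa using ha⟩, hpb⟩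
    have hpprod : (p : ℤ) ∣ (ps.prod (fun p => p) : ℕ) :=
      Int.natCast_dvd_natCast.mpr (Finset.dvd_prod_of_mem (fun p => p) hpmem)
    have : (p : ℤ) ∣ b := by
      have := dvd_sub hpsum (hpprod.mul_right c)
      simpa using this
    exact hpb this

theorem exists_gcd_eq_abs_ac (a b c : ℤ) (habc : Int.gcd (Int.gcd a b) c = 1)
    (hac : a * c ≠ 0) :
    ∃ x y : ℤ, Int.gcd x y = 1 ∧ (Int.gcd (a * x + b * y) (c * y) : ℤ) = |a * c| := by
  have ha : a ≠ 0 := fun h => hac (by simp [h])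
  have habc' : Int.gcd (Int.gcd a (-b)) c = 1 := by
    have : Int.gcd a (-b) = Int.gcd a b := by simp [Int.gcd]
    rwa [this]
  obtain ⟨t, ht⟩ := exists_coprime_shift a (-b) c habc' ha
  refine ⟨-b + t * c, a, ht, ?_⟩
  have hx : a * (-b + t * c) + b * a = a * c * t := by ring
  rw [hx]
  have h2 : Int.gcd (a * c * t) (c * a) = (a * c).natAbs := by
    rw [mul_comm c a]
    have := Int.gcd_mul_left (a * c) t 1
    simpa using this
  rw [h2, Int.abs_eq_natAbs]
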